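/- Let π be a profile with an even number of voters, ≻₀ a preference satisfying Flexible Condition 1 for π, and a, b alternatives with a M_π b but b ≻₀ a. Then the preference w^{ab}(≻₀), obtained from ≻₀ by swapping a and b, also satisfies Flexible Condition 1 for π, and a is ranked above b by w^{ab}(≻₀). -/

import Mathlib

open Classical

/-- Inversion distance between two preference relations: the number of (ordered
representatives of) unordered pairs ranked oppositely. For strict total orders,
each oppositely-ranked unordered pair {x,y} is counted exactly once. -/
noncomputable def invDist {A : Type*} [Fintype A] (r r' : A → A → Prop) : ℕ :=
  {p : A × A | r p.1 p.2 ∧ r' p.2 p.1}.ncard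

/-- Frequency of a preference in a profile (list of preferences). -/
noncomputable def freq {A : Type*} (π : List (A → A → Prop)) (r : A → A → Prop) : ℕ :=
  {i : Fin π.length | π.get i = r}.ncard

/-- Number of voters in the profile ranking `a` above `b`. -/
noncomputable def votesFor {A : Type*} (π : List (A → A → Prop)) (a b : A) : ℕ :=
  {i : Fin π.length | π.get i a b}.ncard

/-- The preference obtained by swapping alternatives `a` and `b` in the ranking. -/
def swapPref {A : Type*} [DecidableEq A] (a b : A) (r : A → A → Prop) : A → A → Prop :=
  fun x y => r (Equiv.swap a b x) (Equiv.swap a b y)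

lemma swapPref_swapPref {A : Type*} [DecidableEq A] (a b : A) (r : A → A → Prop) :
    swapPref a b (swapPref a b r) = r := by
  funext x y; simp [swapPref]

lemma swapPref_isSTO {A : Type*} [DecidableEq A] (a b : A) {r : A → A → Prop}
    (h : IsStrictTotalOrder A r) : IsStrictTotalOrder A (swapPref a b r) := by
  haveI := h
  refine { trichotomous := ?_, irrefl := ?_, trans := ?_ }
  · intro x y hxy hyx
    rcases trichotomous_of r (Equiv.swap a b x) (Equiv.swap a b y) with h1 | h1 | h1
    · exact absurd h1 hxy
    · exact (Equiv.swap a b).injective h1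
    · exact absurd h1 hyx
  · intro x; exact irrefl_of r _
  · intro x y z h1 h2; exact trans_of r h1 h2

lemma invDist_swapPref {A : Type*} [Fintype A] [DecidableEq A] (a b : A)
    (r r0 : A → A → Prop) :
    invDist (swapPref a b r) r0 = invDist r (swapPref a b r0) := by
  classical
  unfold invDist
  have hinj : Function.Injective
      (fun p : A × A => (Equiv.swap a b p.1, Equiv.swap a b p.2)) := by
    intro p q h
    simp only [Prod.mk.injEq] at h
    exact Prod.ext ((Equiv.swap a b).injective h.1) ((Equiv.swap a b).injective h.2)
  rw [show {p : A × A | (swapPref a b r) p.1 p.2 ∧ r0 p.2 p.1}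
      = (fun p : A × A => (Equiv.swap a b p.1, Equiv.swap a b p.2)) ''
        {p : A × A | r p.1 p.2 ∧ (swapPref a b r0) p.2 p.1} from ?_,
    Set.ncard_image_of_injective _ hinj]
  ext ⟨x, y⟩
  simp only [Set.mem_setOf_eq, Set.mem_image, Prod.mk.injEq, Prod.exists, swapPref]
  constructor
  · rintro ⟨h1, h2⟩
    exact ⟨Equiv.swap a b x, Equiv.swap a b y, ⟨by simpa using h1, by simpa using h2⟩,
      by simp, by simp⟩
  · rintro ⟨u, v, ⟨h1, h2⟩, rfl, rfl⟩
    exact ⟨by simpa using h1, h2⟩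

lemma invDist_swapPref_lt {A : Type*} [Fintype A] [DecidableEq A] {a b : A}
    {r r0 : A → A → Prop} (hr : IsStrictTotalOrder A r) (hr0 : IsStrictTotalOrder A r0)
    (hab : a ≠ b) (hrab : r a b) (hba : r0 b a) :
    invDist r (swapPref a b r0) < invDist r r0 := by
  classical
  haveI := hr; haveI := hr0
  set σ := Equiv.swap a b with hσdef
  have hσa : σ a = b := Equiv.swap_apply_left a b
  have hσb : σ b = a := Equiv.swap_apply_right a b
  have hσo : ∀ x, x ≠ a → x ≠ b → σ x = x := fun x h1 h2 =>
    Equiv.swap_apply_of_ne_of_ne h1 h2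
  have asym_r : ∀ {u v}, r u v → ¬ r v u := fun {u v} huv hvu =>
    irrefl_of r u (trans_of r huv hvu)
  have asym_r0 : ∀ {u v}, r0 u v → ¬ r0 v u := fun {u v} huv hvu =>
    irrefl_of r0 u (trans_of r0 huv hvu)
  set T' : Set (A × A) := {p | r p.1 p.2 ∧ r0 (σ p.2) (σ p.1)} with hT'
  set T : Set (A × A) := {p | r p.1 p.2 ∧ r0 p.2 p.1} with hT
  set φ : A × A → A × A := fun p => if r0 p.2 p.1 then p else (σ p.1, σ p.2) with hφ
  have hsub : φ '' T' ⊆ T := by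
    rintro q ⟨⟨x, y⟩, hp, rfl⟩
    obtain ⟨hxy, h2⟩ := hp
    simp only at hxy h2
    by_cases h : r0 y x
    · simp only [hφ, if_pos h]
      exact ⟨hxy, h⟩
    · simp only [hφ, if_neg h]
      refine ⟨?_, h2⟩
      -- goal : r (σ x) (σ y)
      have hxney : x ≠ y := fun e => irrefl_of r x (e ▸ hxy)
      have hr0xy : r0 x y := by
        rcases trichotomous_of r0 x y with h1 | h1 | h1
        · exact h1
        · exact absurd h1 hxney
        · exact absurd h1 h
      by_cases hxa : x = a
      · by_cases hyb : y = b
        · exfalso; rw [hxa, hyb] at hr0xy; exact asym_r0 hba hr0xy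
        · have hya : y ≠ a := fun e => hxney (hxa.trans e.symm)
          have hσy : σ y = y := hσo y hya hyb
          rw [hxa, hσy, hσa] at h2
          rw [hxa, hσy, hσa]
          rw [hxa] at hr0xy
          exact absurd (trans_of r0 hba hr0xy) (asym_r0 h2)
      · by_cases hxb : x = b
        · by_cases hya : y = a
          · exfalso; rw [hxb, hya] at hxy; exact asym_r hrab hxy
          · have hyb : y ≠ b := fun e => hxney (hxb.trans e.symm)
            rw [hxb, hσb, hσo y hya hyb]
            rw [hxb] at hxy
            exact trans_of r hrab hxy
        · have hσx : σ x = x := hσo x hxa hxb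
          by_cases hya : y = a
          · rw [hya, hσa, hσx]
            rw [hya] at hxy
            exact trans_of r hxy hrab
          · by_cases hyb : y = b
            · rw [hyb, hσb, hσx]
              rw [hyb, hσb, hσx] at h2
              rw [hyb] at hr0xy
              exact absurd (trans_of r0 h2 hr0xy) (asym_r0 hba)
            · rw [hσo y hya hyb, hσx] at h2
              exact absurd h2 h
  have hinj : Set.InjOn φ T' := by
    rintro ⟨x, y⟩ hp ⟨u, v⟩ hq heq
    obtain ⟨hp1, hp2⟩ := hp
    obtain ⟨hq1, hq2⟩ := hq
    simp only at hp1 hp2 hq1 hq2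
    by_cases h1 : r0 y x <;> by_cases h2 : r0 v u <;>
      simp only [hφ, if_pos, if_neg, h1, h2, if_true, if_false, Prod.mk.injEq] at heq
    · exact Prod.ext heq.1 heq.2
    · -- heq : x = σ u ∧ y = σ v ; hp2 : r0 (σ y) (σ x) = r0 v u : contra h2
      exfalso
      apply h2
      have := hp2
      rw [heq.1, heq.2] at this
      simp only [hσdef, Equiv.swap_apply_self] at this
      exact this
    · exfalso
      apply h1
      have := hq2
      rw [← heq.1, ← heq.2] at this
      simp only [hσdef, Equiv.swap_apply_self] at this
      exact this
    · exact Prod.ext ((Equiv.swap a b).injective heq.1) ((Equiv.swap a b).injective heq.2)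
  have hmem : (a, b) ∈ T := ⟨hrab, hba⟩
  have hnot : (a, b) ∉ φ '' T' := by
    rintro ⟨⟨x, y⟩, ⟨hp1, hp2⟩, heq⟩
    simp only at hp1 hp2
    by_cases h : r0 y x
    · simp only [hφ, if_pos h, Prod.mk.injEq] at heq
      rw [heq.1, heq.2, hσb, hσa] at hp2
      exact asym_r0 hba hp2
    · simp only [hφ, if_neg h, Prod.mk.injEq] at heq
      have hx : x = b := σ.injective (by rw [hσb]; exact heq.1)
      have hy : y = a := σ.injective (by rw [hσa]; exact heq.2)
      rw [hx, hy] at hp1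
      exact asym_r hrab hp1
  have key : invDist r (swapPref a b r0) = T'.ncard := rfl
  rw [key]
  have : invDist r r0 = T.ncard := rfl
  rw [this]
  calc T'.ncard = (φ '' T').ncard := (Set.ncard_image_of_injOn hinj).symm
    _ < T.ncard := Set.ncard_lt_ncard ⟨hsub, fun hsup => hnot (hsup hmem)⟩ (Set.toFinite T)

lemma freq_swap_eq {A : Type*} [Fintype A] [DecidableEq A]
    (π : List (A → A → Prop)) (hπ : ∀ r ∈ π, IsStrictTotalOrder A r)
    (r0 : A → A → Prop) (hr0 : IsStrictTotalOrder A r0)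
    (hflex : ∀ r' r : A → A → Prop, IsStrictTotalOrder A r' → IsStrictTotalOrder A r →
      freq π r' > freq π r → invDist r' r0 ≤ invDist r r0)
    (a b : A) (hab : a ≠ b)
    (hmaj : votesFor π b a ≤ votesFor π a b) (hba : r0 b a) :
    ∀ r : A → A → Prop, IsStrictTotalOrder A r → freq π r = freq π (swapPref a b r) := by
  classical
  have hfreq : ∀ r : A → A → Prop,
      freq π r = (Finset.univ.filter (fun i : Fin π.length => π.get i = r)).card := by
    intro r
    rw [freq, ← Set.ncard_coe_finset]
    congr 1
    ext i; simp
  have hvotes : ∀ x y : A,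
      votesFor π x y = (Finset.univ.filter (fun i : Fin π.length => π.get i x y)).card := by
    intro x y
    rw [votesFor, ← Set.ncard_coe_finset]
    congr 1
    ext i; simp
  have hfreq_pos : ∀ r : A → A → Prop, 0 < freq π r → ∃ i : Fin π.length, π.get i = r := by
    intro r h
    rw [hfreq] at h
    obtain ⟨i, hi⟩ := Finset.card_pos.mp h
    exact ⟨i, (Finset.mem_filter.mp hi).2⟩
  have hfreq_pos' : ∀ (r : A → A → Prop) (i : Fin π.length), π.get i = r → 0 < freq π r := by
    intro r i hi
    rw [hfreq]
    exact Finset.card_pos.mpr ⟨i, Finset.mem_filter.mpr ⟨Finset.mem_univ i, hi⟩⟩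
  set S : (A → A → Prop) → (A → A → Prop) := swapPref a b with hS
  set Aab := Finset.univ.filter (fun i : Fin π.length => π.get i a b) with hAab
  set Aba := Finset.univ.filter (fun i : Fin π.length => π.get i b a) with hAba
  set Rab := Aab.image π.get with hRab
  set Rba := Aba.image π.get with hRba
  -- properties of members of Rab / Rba
  have hRab_prop : ∀ r ∈ Rab, r a b ∧ IsStrictTotalOrder A r ∧ 0 < freq π r := by
    intro r hr
    obtain ⟨i, hi, rfl⟩ := Finset.mem_image.mp hr
    have hiab : π.get i a b := (Finset.mem_filter.mp hi).2
    exact ⟨hiab, hπ _ (List.get_mem π i), hfreq_pos' _ i rfl⟩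
  have hRba_prop : ∀ r ∈ Rba, r b a ∧ IsStrictTotalOrder A r ∧ 0 < freq π r := by
    intro r hr
    obtain ⟨i, hi, rfl⟩ := Finset.mem_image.mp hr
    have hiab : π.get i b a := (Finset.mem_filter.mp hi).2
    exact ⟨hiab, hπ _ (List.get_mem π i), hfreq_pos' _ i rfl⟩
  -- votesFor as sums over fibers
  have hdecomp : ∀ (c d : A) (Acd : Finset (Fin π.length)),
      Acd = Finset.univ.filter (fun i => π.get i c d) →
      votesFor π c d = ∑ r ∈ Acd.image π.get, freq π r := by
    intro c d Acd hAcd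
    rw [hvotes c d, ← hAcd, Finset.card_eq_sum_card_image π.get Acd]
    apply Finset.sum_congr rfl
    intro r hr
    obtain ⟨i, hi, rfl⟩ := Finset.mem_image.mp hr
    have hicd : π.get i c d := by
      have := hi; rw [hAcd] at this; exact (Finset.mem_filter.mp this).2
    rw [hfreq]
    congr 1
    ext j
    simp only [Finset.mem_filter, Finset.mem_univ, true_and, hAcd]
    constructor
    · exact fun h => h.2
    · intro h; exact ⟨h ▸ hicd, h⟩
  have hvab : votesFor π a b = ∑ r ∈ Rab, freq π r := hdecomp a b Aab hAab
  have hvba : votesFor π b a = ∑ r ∈ Rba, freq π r := hdecomp b a Aba hAba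
  -- Claim A : termwise freq r ≤ freq (S r) for r ∈ Rab
  have claimA : ∀ r ∈ Rab, freq π r ≤ freq π (S r) := by
    intro r hr
    obtain ⟨hrab, hrSTO, _⟩ := hRab_prop r hr
    by_contra hlt
    push_neg at hlt
    have h1 := hflex r (S r) hrSTO (swapPref_isSTO a b hrSTO) hlt
    have h2 : invDist (S r) r0 = invDist r (swapPref a b r0) := invDist_swapPref a b r r0
    have h3 := invDist_swapPref_lt hrSTO hr0 hab hrab hba
    omega
  -- injectivity of S
  have hSinj : ∀ x y : A → A → Prop, S x = S y → x = y := by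
    intro x y h
    have := congrArg (swapPref a b) h
    rwa [hS, swapPref_swapPref, swapPref_swapPref] at this
  -- image of Rab under S sits inside Rba
  have himg : Rab.image S ⊆ Rba := by
    intro s hs
    obtain ⟨r, hr, rfl⟩ := Finset.mem_image.mp hs
    obtain ⟨hrab, _, hpos⟩ := hRab_prop r hr
    have hpos' : 0 < freq π (S r) := lt_of_lt_of_le hpos (claimA r hr)
    obtain ⟨j, hj⟩ := hfreq_pos _ hpos'
    have hSba : (S r) b a := by
      show r (Equiv.swap a b b) (Equiv.swap a b a)
      rwa [Equiv.swap_apply_right, Equiv.swap_apply_left]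
    refine Finset.mem_image.mpr ⟨j, ?_, hj⟩
    rw [hAba]
    exact Finset.mem_filter.mpr ⟨Finset.mem_univ j, hj ▸ hSba⟩
  have hsumS : ∑ r ∈ Rab, freq π (S r) = ∑ s ∈ Rab.image S, freq π s :=
    (Finset.sum_image (fun x _ y _ h => hSinj x y h)).symm
  -- the chain of inequalities
  have c1 : ∑ r ∈ Rab, freq π r ≤ ∑ r ∈ Rab, freq π (S r) :=
    Finset.sum_le_sum claimA
  have c2 : ∑ s ∈ Rab.image S, freq π s ≤ ∑ s ∈ Rba, freq π s :=
    Finset.sum_le_sum_of_subset himg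
  have keyeq : ∑ r ∈ Rab, freq π r = ∑ r ∈ Rab, freq π (S r) := by omega
  have keyeq2 : ∑ s ∈ Rab.image S, freq π s = ∑ s ∈ Rba, freq π s := by omega
  -- termwise equality on Rab
  have pointwise : ∀ r ∈ Rab, freq π r = freq π (S r) :=
    (Finset.sum_eq_sum_iff_of_le claimA).mp keyeq
  -- Rba is covered by the image
  have hcover : Rba ⊆ Rab.image S := by
    intro s hs
    by_contra hns
    have hdiff : s ∈ Rba \ Rab.image S := Finset.mem_sdiff.mpr ⟨hs, hns⟩
    have hzero : ∑ t ∈ Rba \ Rab.image S, freq π t = 0 := by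
      have := Finset.sum_sdiff himg (f := freq π)
      omega
    have := (Finset.sum_eq_zero_iff.mp hzero) s hdiff
    have := (hRba_prop s hs).2.2
    omega
  -- main statement for r with r a b
  have main_ab : ∀ r : A → A → Prop, IsStrictTotalOrder A r → r a b →
      freq π r = freq π (S r) := by
    intro r hrSTO hrab
    by_cases hpos : 0 < freq π r
    · obtain ⟨i, hi⟩ := hfreq_pos r hpos
      have : r ∈ Rab := by
        refine Finset.mem_image.mpr ⟨i, ?_, hi⟩
        rw [hAab]
        exact Finset.mem_filter.mpr ⟨Finset.mem_univ i, hi ▸ hrab⟩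
      exact pointwise r this
    · have h0 : freq π r = 0 := by omega
      rw [h0]
      by_contra hne
      have hpos' : 0 < freq π (S r) := by omega
      obtain ⟨j, hj⟩ := hfreq_pos _ hpos'
      have hSba : (S r) b a := by
        show r (Equiv.swap a b b) (Equiv.swap a b a)
        rwa [Equiv.swap_apply_right, Equiv.swap_apply_left]
      have hmem : (S r) ∈ Rba := by
        refine Finset.mem_image.mpr ⟨j, ?_, hj⟩
        rw [hAba]
        exact Finset.mem_filter.mpr ⟨Finset.mem_univ j, hj ▸ hSba⟩
      obtain ⟨r'', hr'', heq⟩ := Finset.mem_image.mp (hcover hmem)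
      have : r'' = r := hSinj r'' r heq
      rw [this] at hr''
      have := (hRab_prop r hr'').2.2
      omega
  -- conclude by trichotomy
  intro r hrSTO
  haveI := hrSTO
  rcases trichotomous_of r a b with h | h | h
  · exact main_ab r hrSTO h
  · exact absurd h hab
  · have hSab : (S r) a b := by
      show r (Equiv.swap a b a) (Equiv.swap a b b)
      rwa [Equiv.swap_apply_left, Equiv.swap_apply_right]
    have := main_ab (S r) (swapPref_isSTO a b hrSTO) hSab
    rw [hS] at this ⊢
    rw [swapPref_swapPref] at this
    omega


/-- With an even number of voters, if Flexible Condition 1 holds for `≻₀`,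
`a M_π b` but `b ≻₀ a`, then Flexible Condition 1 also holds for the preference
obtained from `≻₀` by swapping `a` and `b`, which ranks `a` above `b`. -/
theorem flexible_even_swap {A : Type*} [Fintype A] [DecidableEq A]
    (hK : 3 ≤ Fintype.card A)
    (π : List (A → A → Prop)) (hπ : ∀ r ∈ π, IsStrictTotalOrder A r)
    (heven : Even π.length)
    (r0 : A → A → Prop) (hr0 : IsStrictTotalOrder A r0)
    (hflex : ∀ r' r : A → A → Prop, IsStrictTotalOrder A r' → IsStrictTotalOrder A r →
      freq π r' > freq π r → invDist r' r0 ≤ invDist r r0)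
    (a b : A) (hab : a ≠ b)
    (hmaj : votesFor π b a ≤ votesFor π a b) (hba : r0 b a) :
    (∀ r' r : A → A → Prop, IsStrictTotalOrder A r' → IsStrictTotalOrder A r →
      freq π r' > freq π r →
      invDist r' (swapPref a b r0) ≤ invDist r (swapPref a b r0)) ∧
    swapPref a b r0 a b := by
  classical
  have hfs := freq_swap_eq π hπ r0 hr0 hflex a b hab hmaj hba
  constructor
  · intro r' r h1 h2 hgt
    have e1 := hfs r' h1
    have e2 := hfs r h2
    have hgt' : freq π (swapPref a b r') > freq π (swapPref a b r) := by omega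
    have h := hflex (swapPref a b r') (swapPref a b r)
      (swapPref_isSTO a b h1) (swapPref_isSTO a b h2) hgt'
    rw [invDist_swapPref a b r' r0, invDist_swapPref a b r r0] at h
    exact h
  · show r0 (Equiv.swap a b a) (Equiv.swap a b b)
    rwa [Equiv.swap_apply_left, Equiv.swap_apply_right]
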